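/- arXiv:1904.02810 — 3 statements merged into one kernel-verified Lean document; each statement's English description precedes it below -/
import Mathlib

section
/- Let p, e ∈ ℝ³ with e₃ > 0. Then (there exists t ∈ T with ‖t − e‖ < ‖t − p‖) if and only if it is not the case that (e₁ = p₁, e₂ = p₂, and e₃ ≥ |p₃|). (Lemma 1: the evader winning subspace of the one-pursuer game is the complement in the play half-space of the barrier point together with the pursuer winning ray.) -/
lemma euc3_norm_lt_iff (x y : EuclideanSpace ℝ (Fin 3)) :
    ‖x‖ < ‖y‖ ↔ x 0 ^ 2 + x 1 ^ 2 + x 2 ^ 2 < y 0 ^ 2 + y 1 ^ 2 + y 2 ^ 2 := by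
  rw [EuclideanSpace.norm_eq, EuclideanSpace.norm_eq, Fin.sum_univ_three, Fin.sum_univ_three]
  simp only [Real.norm_eq_abs, sq_abs]
  exact Real.sqrt_lt_sqrt_iff (by positivity)

/-- Lemma 1 (evader winning subspace): the evader winning subspace of the one-pursuer game
is the complement in the play half-space of the barrier point together with the pursuer
winning ray. -/
theorem one_pursuer_evader_winning (p e : EuclideanSpace ℝ (Fin 3)) (he : e 2 > 0) :
    (∃ t : EuclideanSpace ℝ (Fin 3), t 2 = 0 ∧ ‖t - e‖ < ‖t - p‖) ↔
    ¬(e 0 = p 0 ∧ e 1 = p 1 ∧ e 2 ≥ |p 2|) := by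
  constructor
  · rintro ⟨t, ht, hlt⟩ ⟨h0, h1, h2⟩
    rw [euc3_norm_lt_iff] at hlt
    simp only [PiLp.sub_apply] at hlt
    have hp2 : p 2 ^ 2 ≤ e 2 ^ 2 := by
      have h2' : |p 2| ≤ e 2 := h2
      nlinarith [sq_abs (p 2), abs_nonneg (p 2)]
    rw [h0, h1, ht] at hlt
    nlinarith
  · intro h
    by_cases hh : e 0 = p 0 ∧ e 1 = p 1
    · obtain ⟨h0, h1⟩ := hh
      have h2 : e 2 < |p 2| := by
        by_contra hc
        push_neg at hc
        exact h ⟨h0, h1, hc⟩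
      refine ⟨(WithLp.equiv 2 _).symm ![e 0, e 1, 0], rfl, ?_⟩
      rw [euc3_norm_lt_iff]
      simp only [PiLp.sub_apply, WithLp.equiv_symm_apply, PiLp.toLp_apply]
      simp only [Matrix.cons_val_zero, Matrix.cons_val_one, Matrix.head_cons,
        Matrix.cons_val_two, Matrix.tail_cons]
      rw [h0, h1]
      nlinarith [sq_abs (p 2), abs_nonneg (p 2)]
    · have hd2 : 0 < (e 0 - p 0) ^ 2 + (e 1 - p 1) ^ 2 := by
        rcases not_and_or.mp hh with h' | h'
        · have : e 0 - p 0 ≠ 0 := sub_ne_zero.mpr h'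
          nlinarith [sq_nonneg (e 1 - p 1), sq_pos_of_ne_zero this]
        · have : e 1 - p 1 ≠ 0 := sub_ne_zero.mpr h'
          nlinarith [sq_nonneg (e 0 - p 0), sq_pos_of_ne_zero this]
      set a := e 0 - p 0
      set b := e 1 - p 1
      set d2 := a ^ 2 + b ^ 2 with hd2def
      set s := (e 2 ^ 2 - p 2 ^ 2) / (2 * d2) with hs
      refine ⟨(WithLp.equiv 2 _).symm ![e 0 + s * a, e 1 + s * b, 0], rfl, ?_⟩
      rw [euc3_norm_lt_iff]
      simp only [PiLp.sub_apply, WithLp.equiv_symm_apply, PiLp.toLp_apply]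
      simp only [Matrix.cons_val_zero, Matrix.cons_val_one, Matrix.head_cons,
        Matrix.cons_val_two, Matrix.tail_cons]
      have key : (1 + 2 * s) * d2 = d2 + (e 2 ^ 2 - p 2 ^ 2) := by
        rw [hs]
        field_simp
      have ha : e 0 + s * a - e 0 = s * a := by ring
      have hb : e 1 + s * b - e 1 = s * b := by ring
      have ha' : e 0 + s * a - p 0 = (1 + s) * a := by simp [a]; ring
      have hb' : e 1 + s * b - p 1 = (1 + s) * b := by simp [b]; ring
      rw [ha, hb, ha', hb']
      nlinarith [key, hd2]
end

section
/- Let p₁, p₂, p₃ ∈ ℝ³ be pairwise distinct and fix i ∈ {1, 2, 3}. Then (for every t ∈ T and every k ≠ i, ‖t − p_i‖ < ‖t − p_k‖) if and only if (for every k ≠ i: p_{i,1} = p_{k,1}, p_{i,2} = p_{k,2}, and |p_{i,3}| < |p_{k,3}|). (Lemma 3, first case: the three-pursuer barrier depends on pursuer P_i alone iff P_i shares its horizontal projection with each other pursuer and is strictly closer to T.) -/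
lemma norm3 (v : EuclideanSpace ℝ (Fin 3)) :
    ‖v‖ = Real.sqrt (v 0 ^ 2 + v 1 ^ 2 + v 2 ^ 2) := by
  simp [EuclideanSpace.norm_eq, Fin.sum_univ_three, sq_abs]

lemma lt_iff_sq (A B : ℝ) (hA : 0 ≤ A) : Real.sqrt A < Real.sqrt B ↔ A < B := by
  constructor
  · intro h
    by_contra hle
    exact absurd (Real.sqrt_le_sqrt (not_lt.1 hle)) (not_le.2 h)
  · exact fun h => Real.sqrt_lt_sqrt hA h

lemma key_lin (m c : ℝ) (h : ∀ a : ℝ, 0 < m * a + c) : m = 0 := by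
  by_contra hm
  have := h (-(c + 1) / m)
  rw [mul_div_cancel₀ _ hm] at this
  linarith

lemma two_point (x y : EuclideanSpace ℝ (Fin 3)) :
    (∀ t : EuclideanSpace ℝ (Fin 3), t 2 = 0 → ‖t - x‖ < ‖t - y‖) ↔
    (x 0 = y 0 ∧ x 1 = y 1 ∧ |x 2| < |y 2|) := by
  have key : ∀ t : EuclideanSpace ℝ (Fin 3), (‖t - x‖ < ‖t - y‖ ↔
      (t 0 - x 0)^2 + (t 1 - x 1)^2 + (t 2 - x 2)^2 <
      (t 0 - y 0)^2 + (t 1 - y 1)^2 + (t 2 - y 2)^2) := by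
    intro t
    rw [norm3, norm3]
    simp only [PiLp.sub_apply]
    exact lt_iff_sq _ _ (by positivity)
  have mk : ∀ a b : ℝ, ∃ t : EuclideanSpace ℝ (Fin 3),
      t 0 = a ∧ t 1 = b ∧ t 2 = 0 := by
    intro a b
    exact ⟨WithLp.toLp 2 (![a, b, 0] : Fin 3 → ℝ), by simp, by simp, by simp⟩
  constructor
  · intro H
    have Q : ∀ a b : ℝ, (a - x 0)^2 + (b - x 1)^2 + x 2 ^2 <
        (a - y 0)^2 + (b - y 1)^2 + y 2 ^2 := by
      intro a b
      obtain ⟨t, h0, h1, h2⟩ := mk a b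
      have := (key t).1 (H t h2)
      rw [h0, h1, h2] at this
      simpa using this
    have h0 : x 0 = y 0 := by
      have := key_lin (2 * (x 0 - y 0))
        ((y 0)^2 + (x 1 - y 1)^2 + (y 2)^2 - (x 0)^2 - (x 2)^2)
        (fun a => by nlinarith [Q a (x 1)])
      nlinarith [this]
    have h1 : x 1 = y 1 := by
      have := key_lin (2 * (x 1 - y 1))
        ((x 0 - y 0)^2 + (y 1)^2 + (y 2)^2 - (x 1)^2 - (x 2)^2)
        (fun b => by nlinarith [Q (x 0) b])
      nlinarith [this]
    refine ⟨h0, h1, ?_⟩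
    have hsq : x 2 ^ 2 < y 2 ^ 2 := by
      have := Q (x 0) (x 1)
      rw [h0, h1] at this
      nlinarith [this]
    rw [← sq_abs (x 2), ← sq_abs (y 2)] at hsq
    exact (pow_lt_pow_iff_left₀ (abs_nonneg _) (abs_nonneg _) (by norm_num)).1 hsq
  · rintro ⟨h0, h1, h2⟩ t ht
    rw [key t, h0, h1, ht]
    have : x 2 ^ 2 < y 2 ^ 2 := by
      have := sq_abs (x 2); have := sq_abs (y 2)
      nlinarith [abs_nonneg (x 2), h2]
    nlinarith

/-- Lemma 3 (first case): the three-pursuer barrier depends on pursuer `P_i` alone iff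
`P_i` shares its horizontal projection with each other pursuer and is strictly closer to
the target plane. -/
theorem three_pursuer_single_active (p : Fin 3 → EuclideanSpace ℝ (Fin 3))
    (hdist : Function.Injective p) (i : Fin 3) :
    (∀ t : EuclideanSpace ℝ (Fin 3), t 2 = 0 → ∀ k, k ≠ i → ‖t - p i‖ < ‖t - p k‖) ↔
    (∀ k, k ≠ i → p i 0 = p k 0 ∧ p i 1 = p k 1 ∧ |p i 2| < |p k 2|) := by
  constructor
  · intro H k hk
    exact (two_point (p i) (p k)).1 (fun t ht => H t ht k hk) 
  · intro H t ht k hk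
    exact (two_point (p i) (p k)).2 (H k hk) t ht
end

section
/- Let p₁, p₂, p₃ ∈ ℝ³ be jointly active pursuers whose projections p̄₁, p̄₂, p̄₃ onto T are not collinear, let c be the unique point of T with ‖c − p₁‖ = ‖c − p₂‖ = ‖c − p₃‖, let r = ‖p₁ − c‖, and let S be the convex hull of {p̄₁, p̄₂, p̄₃} in T. Let e ∈ ℝ³ with e₃ > 0, e ∉ {p₁, p₂, p₃}. Then the following are equivalent: (i) for every t ∈ T, min(‖t − p₁‖, ‖t − p₂‖, ‖t − p₃‖) ≤ ‖t − e‖, and there exists t ∈ T with ‖t − e‖ ≤ min(‖t − p₁‖, ‖t − p₂‖, ‖t − p₃‖); (ii) ‖e − c‖ = r and (e₁, e₂, 0) ∈ S. (Theorem 3: the barrier for three noncollinear-projection active pursuers is the part of the sphere of radius r centered at c lying over the triangle S in the play half-space.) -/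
noncomputable section

/-- The point of `ℝ³` with the given three coordinates. -/
def mk3 (x y z : ℝ) : EuclideanSpace ℝ (Fin 3) :=
  (WithLp.equiv 2 (Fin 3 → ℝ)).symm ![x, y, z]

/-- The projection of a point onto the target plane `T = {z | z₃ = 0}`. -/
def projT (p : EuclideanSpace ℝ (Fin 3)) : EuclideanSpace ℝ (Fin 3) :=
  mk3 (p 0) (p 1) 0

/-- The mirror of a point across the target plane `T = {z | z₃ = 0}`. -/
def mirrorT (p : EuclideanSpace ℝ (Fin 3)) : EuclideanSpace ℝ (Fin 3) :=
  mk3 (p 0) (p 1) (-(p 2))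

/-- `c` is the simultaneous-arrival point `c_{a,b}`: the (unique) point of the target
plane on the line through the projections of `a` and `b` that is equidistant from
`a` and `b`. -/
def IsCab (a b c : EuclideanSpace ℝ (Fin 3)) : Prop :=
  c 2 = 0 ∧ (∃ u : ℝ, c = projT a + u • (projT b - projT a)) ∧ ‖c - a‖ = ‖c - b‖

/-- Membership in the pursuer winning subspace `W_P^{a,b}` of the pair `{a, b}`, given the
simultaneous-arrival point `c = c_{a,b}`. -/
def memWP (a b c z : EuclideanSpace ℝ (Fin 3)) : Prop :=
  z 2 > 0 ∧
  (∃ β : ℝ, 0 ≤ β ∧ β ≤ 1 ∧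
    z 0 = β * a 0 + (1 - β) * b 0 ∧ z 1 = β * a 1 + (1 - β) * b 1) ∧
  ‖z - c‖ > ‖a - c‖

/-- Three pursuers are jointly active: for every pair `i ≠ j` their horizontal projections
differ, and neither the remaining pursuer `p_k` nor its mirror across the target plane lies
in the pursuer winning subspace `W_P^{p_i,p_j}` of the pair. -/
def JointlyActive (p : Fin 3 → EuclideanSpace ℝ (Fin 3)) : Prop :=
  ∀ i j k : Fin 3, i ≠ j → k ≠ i → k ≠ j →
    (p i 0, p i 1) ≠ (p j 0, p j 1) ∧
    ∀ c : EuclideanSpace ℝ (Fin 3), IsCab (p i) (p j) c →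
      ¬memWP (p i) (p j) c (p k) ∧ ¬memWP (p i) (p j) c (mirrorT (p k))

private lemma normsq3 (x : EuclideanSpace ℝ (Fin 3)) :
    ‖x‖^2 = (x 0)^2 + (x 1)^2 + (x 2)^2 := by
  rw [EuclideanSpace.norm_eq, Real.sq_sqrt (by positivity)]
  simp [Fin.sum_univ_three, sq_abs]

private lemma key3 (q e t c : EuclideanSpace ℝ (Fin 3)) (ht : t 2 = 0) (hc : c 2 = 0) :
    ‖t - q‖^2 - ‖t - e‖^2 =
      2*((t 0 - c 0)*(e 0 - q 0) + (t 1 - c 1)*(e 1 - q 1))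
        + (‖c - q‖^2 - ‖e - c‖^2) := by
  have hx : ∀ x y : EuclideanSpace ℝ (Fin 3),
      ‖x - y‖^2 = (x 0 - y 0)^2 + (x 1 - y 1)^2 + (x 2 - y 2)^2 := fun x y => normsq3 _
  rw [hx, hx, hx, hx, ht, hc]; ring

private lemma sqle3 {a b : ℝ} (ha : 0 ≤ a) (hb : 0 ≤ b) : a ≤ b ↔ a^2 ≤ b^2 := by
  constructor <;> intro h <;> nlinarith

private lemma mem_hull3 {E : Type*} [NormedAddCommGroup E] [InnerProductSpace ℝ E]
    {a b c x : E} :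
    x ∈ convexHull ℝ ({a, b, c} : Set E) ↔
    ∃ l0 l1 l2 : ℝ, 0 ≤ l0 ∧ 0 ≤ l1 ∧ 0 ≤ l2 ∧ l0 + l1 + l2 = 1 ∧
      l0 • a + l1 • b + l2 • c = x := by
  constructor
  · intro hx
    rw [convexHull_insert ⟨b, by simp⟩, mem_convexJoin] at hx
    obtain ⟨a', ha', z, hz, hseg⟩ := hx
    rw [Set.mem_singleton_iff] at ha'
    subst ha'
    rw [convexHull_pair] at hz
    obtain ⟨u, v, hu, hv, huv, hz⟩ := hz
    obtain ⟨s, t, hs, ht, hst, hx⟩ := hseg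
    refine ⟨s, t * u, t * v, hs, by positivity, by positivity, by nlinarith, ?_⟩
    rw [← hx, ← hz]
    module
  · rintro ⟨l0, l1, l2, h0, h1, h2, hsum, rfl⟩
    have := Finset.centerMass_mem_convexHull (Finset.univ : Finset (Fin 3))
      (w := ![l0, l1, l2]) (z := ![a, b, c]) (s := {a, b, c}) ?_ ?_ ?_
    · convert this using 1
      rw [Finset.centerMass]
      simp [Fin.sum_univ_three, hsum]
    · intro i _; fin_cases i <;> simp [h0, h1, h2]
    · simp [Fin.sum_univ_three, hsum]
    · intro i _; fin_cases i <;> simp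

private lemma combo3 (X Y e0 e1 a0 a1 b0 b1 c0 c1 l0 l1 l2 K : ℝ)
    (hsum : l0 + l1 + l2 = 1)
    (h0 : l0*a0 + l1*b0 + l2*c0 = e0) (h1 : l0*a1 + l1*b1 + l2*c1 = e1) :
    l0*(2*(X*(e0-a0) + Y*(e1-a1)) + K) + l1*(2*(X*(e0-b0) + Y*(e1-b1)) + K)
      + l2*(2*(X*(e0-c0) + Y*(e1-c1)) + K) = K := by
  linear_combination (2*X*e0 + 2*Y*e1 + K)*hsum - 2*X*h0 - 2*Y*h1

private lemma nonneg_combo3 {l0 l1 l2 A0 A1 A2 K : ℝ} (h0 : 0 ≤ l0) (h1 : 0 ≤ l1)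
    (h2 : 0 ≤ l2) (hA0 : 0 ≤ A0) (hA1 : 0 ≤ A1) (hA2 : 0 ≤ A2)
    (hcb : l0*A0 + l1*A1 + l2*A2 = K) : 0 ≤ K := by
  have := mul_nonneg h0 hA0
  have := mul_nonneg h1 hA1
  have := mul_nonneg h2 hA2
  linarith

private lemma pos_combo3 {l0 l1 l2 A0 A1 A2 : ℝ} (h0 : 0 ≤ l0) (h1 : 0 ≤ l1)
    (h2 : 0 ≤ l2) (hsum : l0 + l1 + l2 = 1) (hA0 : 0 < A0) (hA1 : 0 < A1) (hA2 : 0 < A2)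
    (hcb : l0*A0 + l1*A1 + l2*A2 = 0) : False := by
  have hthird : 1/3 ≤ l0 ∨ 1/3 ≤ l1 ∨ 1/3 ≤ l2 := by
    by_contra hx; push_neg at hx; linarith [hx.1, hx.2.1, hx.2.2]
  rcases hthird with h | h | h
  · nlinarith [mul_nonneg h1 hA1.le, mul_nonneg h2 hA2.le,
      mul_le_mul_of_nonneg_right h hA0.le]
  · nlinarith [mul_nonneg h0 hA0.le, mul_nonneg h2 hA2.le,
      mul_le_mul_of_nonneg_right h hA1.le]
  · nlinarith [mul_nonneg h0 hA0.le, mul_nonneg h1 hA1.le,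
      mul_le_mul_of_nonneg_right h hA2.le]


/-- Theorem 3 (barrier): for three jointly active pursuers with noncollinear projections,
with `c` the unique point of the target plane equidistant from the three pursuers,
`r = ‖p₁ − c‖`, and `S` the triangle spanned by the projections, the barrier is the part
of the sphere of radius `r` centered at `c` lying over `S` in the play half-space. -/
theorem noncollinear_three_pursuer_barrier (p : Fin 3 → EuclideanSpace ℝ (Fin 3))
    (hactive : JointlyActive p)
    (hncol : ¬Collinear ℝ ({projT (p 0), projT (p 1), projT (p 2)} :
      Set (EuclideanSpace ℝ (Fin 3))))
    (c : EuclideanSpace ℝ (Fin 3)) (hcT : c 2 = 0)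
    (hc1 : ‖c - p 0‖ = ‖c - p 1‖) (hc2 : ‖c - p 1‖ = ‖c - p 2‖)
    (e : EuclideanSpace ℝ (Fin 3)) (he : e 2 > 0) (hne : ∀ m, e ≠ p m) :
    ((∀ t : EuclideanSpace ℝ (Fin 3), t 2 = 0 →
        min ‖t - p 0‖ (min ‖t - p 1‖ ‖t - p 2‖) ≤ ‖t - e‖) ∧
      (∃ t : EuclideanSpace ℝ (Fin 3), t 2 = 0 ∧
        ‖t - e‖ ≤ min ‖t - p 0‖ (min ‖t - p 1‖ ‖t - p 2‖))) ↔
    (‖e - c‖ = ‖p 0 - c‖ ∧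
      projT e ∈ convexHull ℝ ({projT (p 0), projT (p 1), projT (p 2)} :
        Set (EuclideanSpace ℝ (Fin 3)))) := by
  have hr1 : ‖c - p 1‖ = ‖c - p 0‖ := hc1.symm
  have hr2 : ‖c - p 2‖ = ‖c - p 0‖ := (hc1.trans hc2).symm
  obtain ⟨K, hKdef⟩ : ∃ K : ℝ, K = ‖c - p 0‖^2 - ‖e - c‖^2 := ⟨_, rfl⟩
  have hK0 : ‖c - p 0‖^2 - ‖e - c‖^2 = K := hKdef.symm
  have hK1 : ‖c - p 1‖^2 - ‖e - c‖^2 = K := by rw [hr1]; exact hKdef.symm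
  have hK2 : ‖c - p 2‖^2 - ‖e - c‖^2 = K := by rw [hr2]; exact hKdef.symm
  have hkey : ∀ i : Fin 3, ∀ t : EuclideanSpace ℝ (Fin 3), t 2 = 0 →
      ‖c - p i‖^2 - ‖e - c‖^2 = K →
      ‖t - p i‖^2 - ‖t - e‖^2 =
        2*((t 0 - c 0)*(e 0 - p i 0) + (t 1 - c 1)*(e 1 - p i 1)) + K := by
    intro i t ht hKi
    rw [key3 (p i) e t c ht hcT, hKi]
  constructor
  · rintro ⟨hB, t0, ht0, hA⟩
    have hhull : projT e ∈ convexHull ℝ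
        ({projT (p 0), projT (p 1), projT (p 2)} : Set (EuclideanSpace ℝ (Fin 3))) := by
      by_contra hcon
      obtain ⟨f, u, h1, h2⟩ := geometric_hahn_banach_closed_point
        (convex_convexHull ℝ _) ((Set.toFinite _).isClosed_convexHull ℝ) hcon
      obtain ⟨w, hfw⟩ : ∃ w : EuclideanSpace ℝ (Fin 3), ∀ x, f x = (inner ℝ w x : ℝ) :=
        ⟨(InnerProductSpace.toDual ℝ _).symm f,
          fun x => (InnerProductSpace.toDual_symm_apply).symm⟩
      obtain ⟨δ, hδ⟩ : ∃ δ : ℝ, δ = f (projT e) - u := ⟨_, rfl⟩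
      have hδpos : 0 < δ := by rw [hδ]; linarith
      obtain ⟨s, hs⟩ : ∃ s : ℝ, s = (|K| + 1) / (2*δ) := ⟨_, rfl⟩
      have hs0 : 0 ≤ s := by rw [hs]; positivity
      have hsd : 2 * s * δ = |K| + 1 := by rw [hs]; field_simp
      obtain ⟨t, ht0', ht1', ht2'⟩ : ∃ t : EuclideanSpace ℝ (Fin 3),
          t 0 = c 0 + s * w 0 ∧ t 1 = c 1 + s * w 1 ∧ t 2 = 0 :=
        ⟨mk3 (c 0 + s * w 0) (c 1 + s * w 1) 0, rfl, rfl, rfl⟩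
      have hinner : ∀ x : EuclideanSpace ℝ (Fin 3),
          (inner ℝ w (projT x) : ℝ) = w 0 * x 0 + w 1 * x 1 := by
        intro x
        simp [PiLp.inner_apply, Fin.sum_univ_three, RCLike.inner_apply, projT, mk3]; ring
      have hlt : ∀ i : Fin 3, projT (p i) ∈
          ({projT (p 0), projT (p 1), projT (p 2)} : Set (EuclideanSpace ℝ (Fin 3))) →
          ‖c - p i‖^2 - ‖e - c‖^2 = K → ‖t - e‖ < ‖t - p i‖ := by
        intro i hmem' hKi
        have hfi : f (projT (p i)) < u := h1 _ (subset_convexHull ℝ _ hmem')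
        have hD : (t 0 - c 0)*(e 0 - p i 0) + (t 1 - c 1)*(e 1 - p i 1)
            = s * ((inner ℝ w (projT e) : ℝ) - (inner ℝ w (projT (p i)) : ℝ)) := by
          rw [hinner, hinner, ht0', ht1']; ring
        have hgap : δ ≤ f (projT e) - f (projT (p i)) := by rw [hδ]; linarith
        have hpos : 0 < ‖t - p i‖^2 - ‖t - e‖^2 := by
          rw [hkey i t ht2' hKi, hD, ← hfw, ← hfw]
          have h3 : s * δ ≤ s * (f (projT e) - f (projT (p i))) :=
            mul_le_mul_of_nonneg_left hgap hs0
          have h4 : -|K| ≤ K := neg_abs_le K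
          linarith
        by_contra hcc
        push_neg at hcc
        have := (sqle3 (norm_nonneg (t - p i)) (norm_nonneg (t - e))).mp hcc
        linarith
      have hmin := hB t ht2'
      have l0 := hlt 0 (by simp) hK0
      have l1 := hlt 1 (by simp) hK1
      have l2 := hlt 2 (by simp) hK2
      have := lt_min l0 (lt_min l1 l2)
      linarith
    refine ⟨?_, hhull⟩
    obtain ⟨l0, l1, l2, h0, h1, h2, hsum, hcomb⟩ := mem_hull3.mp hhull
    have hx0 : l0 * p 0 0 + l1 * p 1 0 + l2 * p 2 0 = e 0 := congrArg (fun v : EuclideanSpace ℝ (Fin 3) => v 0) hcomb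
    have hx1 : l0 * p 0 1 + l1 * p 1 1 + l2 * p 2 1 = e 1 := congrArg (fun v : EuclideanSpace ℝ (Fin 3) => v 1) hcomb
    have hAle : ∀ i : Fin 3, ‖t0 - e‖ ≤ ‖t0 - p i‖ → 0 ≤ ‖t0 - p i‖^2 - ‖t0 - e‖^2 := by
      intro i hle
      have := (sqle3 (norm_nonneg (t0 - e)) (norm_nonneg (t0 - p i))).mp hle
      linarith
    have ha0 := hAle 0 (hA.trans (min_le_left _ _))
    have ha1 := hAle 1 (hA.trans ((min_le_right _ _).trans (min_le_left _ _)))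
    have ha2 := hAle 2 (hA.trans ((min_le_right _ _).trans (min_le_right _ _)))
    rw [hkey 0 t0 ht0 hK0] at ha0
    rw [hkey 1 t0 ht0 hK1] at ha1
    rw [hkey 2 t0 ht0 hK2] at ha2
    have hcb := combo3 (t0 0 - c 0) (t0 1 - c 1) (e 0) (e 1)
      (p 0 0) (p 0 1) (p 1 0) (p 1 1) (p 2 0) (p 2 1) l0 l1 l2 K hsum hx0 hx1
    have hgeK : 0 ≤ K := nonneg_combo3 h0 h1 h2 ha0 ha1 ha2 hcb
    have h5 : ‖e - c‖ ≤ ‖c - p 0‖ := by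
      rw [sqle3 (norm_nonneg _) (norm_nonneg _)]
      rw [hKdef] at hgeK; linarith
    have h6 : ‖c - p 0‖ ≤ ‖e - c‖ := by
      have := hB c hcT
      rw [hr1, hr2, min_self, min_self, norm_sub_rev c e] at this
      exact this
    rw [norm_sub_rev (p 0) c]
    exact le_antisymm h5 h6
  · rintro ⟨hρr, hhull⟩
    have hKzero : K = 0 := by
      rw [hKdef, hρr, norm_sub_rev (p 0) c]; ring
    obtain ⟨l0, l1, l2, h0, h1, h2, hsum, hcomb⟩ := mem_hull3.mp hhull
    have hx0 : l0 * p 0 0 + l1 * p 1 0 + l2 * p 2 0 = e 0 := congrArg (fun v : EuclideanSpace ℝ (Fin 3) => v 0) hcomb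
    have hx1 : l0 * p 0 1 + l1 * p 1 1 + l2 * p 2 1 = e 1 := congrArg (fun v : EuclideanSpace ℝ (Fin 3) => v 1) hcomb
    constructor
    · intro t ht
      by_contra hcon
      push_neg at hcon
      rw [lt_min_iff, lt_min_iff] at hcon
      obtain ⟨hl0', hl1', hl2'⟩ := hcon
      have hApos : ∀ i : Fin 3, ‖t - e‖ < ‖t - p i‖ → 0 < ‖t - p i‖^2 - ‖t - e‖^2 := by
        intro i hlt
        nlinarith [norm_nonneg (t - e), norm_nonneg (t - p i)]
      have ha0 := hApos 0 hl0'
      have ha1 := hApos 1 hl1'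
      have ha2 := hApos 2 hl2'
      rw [hkey 0 t ht hK0] at ha0
      rw [hkey 1 t ht hK1] at ha1
      rw [hkey 2 t ht hK2] at ha2
      have hcb := combo3 (t 0 - c 0) (t 1 - c 1) (e 0) (e 1)
        (p 0 0) (p 0 1) (p 1 0) (p 1 1) (p 2 0) (p 2 1) l0 l1 l2 K hsum hx0 hx1
      rw [hKzero] at hcb ha0 ha1 ha2
      exact pos_combo3 h0 h1 h2 hsum ha0 ha1 ha2 hcb
    · refine ⟨c, hcT, ?_⟩
      have hce : ‖c - e‖ = ‖c - p 0‖ := by rw [norm_sub_rev, hρr, norm_sub_rev (p 0) c]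
      rw [hr1, hr2, min_self, min_self, hce]
end
end
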